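/- Let S ∈ ℝ^{n×n} be nonsingular, σ > 0, I' diagonal with ±1 entries, ε ∈ (0,1], and suppose σ ‖S^{-1}‖_∞ ≤ 1/(2/ε + 1). Let z* = S^{-1} b and z̃* = (S + σI')^{-1} b. Then ‖z̃* − z*‖_∞ ≤ (ε/2) ‖z*‖_∞. -/

import Mathlib

attribute [local instance] Matrix.linftyOpNormedRing
attribute [local instance] Matrix.linftyOpNormedSpace

theorem stmt_11 (n : ℕ) (S : Matrix (Fin n) (Fin n) ℝ) (hS : S.det ≠ 0)
    (σ : ℝ) (hσ : 0 < σ) (d : Fin n → ℝ) (hd : ∀ i, d i = 1 ∨ d i = -1)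
    (ε : ℝ) (hε : 0 < ε) (hε1 : ε ≤ 1)
    (hσS : σ * ‖S⁻¹‖ ≤ 1 / (2 / ε + 1))
    (b : Fin n → ℝ) :
    ‖(S + σ • Matrix.diagonal d)⁻¹.mulVec b - S⁻¹.mulVec b‖ ≤
      (ε / 2) * ‖S⁻¹.mulVec b‖ := by
  have hSu : IsUnit S.det := isUnit_iff_ne_zero.mpr hS
  set D : Matrix (Fin n) (Fin n) ℝ := Matrix.diagonal d with hD
  set T : Matrix (Fin n) (Fin n) ℝ := σ • (S⁻¹ * D) with hT
  have hDnorm : ‖D‖ ≤ 1 := by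
    rw [hD, Matrix.linfty_opNorm_diagonal]
    rw [pi_norm_le_iff_of_nonneg (by norm_num : (0:ℝ) ≤ 1)]
    intro i
    rcases hd i with h1 | h1 <;> simp [h1]
  have hk1 : 1 / (2 / ε + 1) < 1 := by
    rw [div_lt_one (by positivity)]
    have : 0 < 2 / ε := by positivity
    linarith
  have hTnorm : ‖T‖ ≤ σ * ‖S⁻¹‖ := by
    rw [hT, norm_smul, Real.norm_eq_abs, abs_of_pos hσ]
    calc σ * ‖S⁻¹ * D‖ ≤ σ * (‖S⁻¹‖ * ‖D‖) := by
          gcongr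
          exact norm_mul_le _ _
      _ ≤ σ * (‖S⁻¹‖ * 1) := by gcongr
      _ = σ * ‖S⁻¹‖ := by ring
  have hTlt : ‖T‖ < 1 := lt_of_le_of_lt (hTnorm.trans hσS) hk1
  have hUnit : IsUnit (1 + T) := by
    have := (Units.oneSub (-T) (by rwa [norm_neg])).isUnit
    simpa [sub_neg_eq_add] using this
  have hfact : S + σ • D = S * (1 + T) := by
    rw [mul_add, mul_one, hT, Matrix.mul_smul, ← Matrix.mul_assoc,
      Matrix.mul_nonsing_inv S hSu, Matrix.one_mul]
  have hAdet : (S + σ • D).det ≠ 0 := by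
    rw [hfact, Matrix.det_mul]
    exact mul_ne_zero hS (hUnit.map Matrix.detMonoidHom).ne_zero
  set A := S + σ • D with hA
  set zt := A⁻¹.mulVec b with hzt
  set z := S⁻¹.mulVec b with hz
  have hAzt : A.mulVec zt = b := by
    rw [hzt, Matrix.mulVec_mulVec, Matrix.mul_nonsing_inv A (isUnit_iff_ne_zero.mpr hAdet),
      Matrix.one_mulVec]
  have hSz : S.mulVec zt + σ • D.mulVec zt = b := by
    rw [← hAzt, hA, Matrix.add_mulVec, Matrix.smul_mulVec]
  have hdiff : zt - z = -(σ • (S⁻¹.mulVec (D.mulVec zt))) := by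
    have h1 : S.mulVec zt = b - σ • D.mulVec zt := by
      rw [← hSz]; abel
    have h2 : zt = S⁻¹.mulVec (S.mulVec zt) := by
      rw [Matrix.mulVec_mulVec, Matrix.nonsing_inv_mul S hSu, Matrix.one_mulVec]
    rw [hz]
    calc zt - S⁻¹.mulVec b = S⁻¹.mulVec (S.mulVec zt) - S⁻¹.mulVec b := by rw [← h2]
      _ = S⁻¹.mulVec (b - σ • D.mulVec zt) - S⁻¹.mulVec b := by rw [← h1]
      _ = -(σ • (S⁻¹.mulVec (D.mulVec zt))) := by
          rw [Matrix.mulVec_sub, Matrix.mulVec_smul]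
          abel
  have hDzt : ‖D.mulVec zt‖ ≤ ‖zt‖ := by
    calc ‖D.mulVec zt‖ ≤ ‖D‖ * ‖zt‖ := Matrix.linfty_opNorm_mulVec _ _
      _ ≤ 1 * ‖zt‖ := by gcongr
      _ = ‖zt‖ := one_mul _
  have hbound : ‖zt - z‖ ≤ σ * ‖S⁻¹‖ * ‖zt‖ := by
    rw [hdiff, norm_neg, norm_smul, Real.norm_eq_abs, abs_of_pos hσ, mul_assoc]
    gcongr
    calc ‖S⁻¹.mulVec (D.mulVec zt)‖ ≤ ‖S⁻¹‖ * ‖D.mulVec zt‖ :=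
        Matrix.linfty_opNorm_mulVec _ _
      _ ≤ ‖S⁻¹‖ * ‖zt‖ := by gcongr
  have hzt_le : ‖zt‖ ≤ ‖z‖ + ‖zt - z‖ := by
    calc ‖zt‖ = ‖z + (zt - z)‖ := by congr 1; abel
      _ ≤ ‖z‖ + ‖zt - z‖ := norm_add_le _ _
  set c := σ * ‖S⁻¹‖ with hc
  have hc0 : 0 ≤ c := by positivity
  have key : ‖zt - z‖ ≤ c * ‖z‖ + c * ‖zt - z‖ := by
    calc ‖zt - z‖ ≤ c * ‖zt‖ := hbound
      _ ≤ c * (‖z‖ + ‖zt - z‖) := by gcongr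
      _ = c * ‖z‖ + c * ‖zt - z‖ := mul_add _ _ _
  have heps : (0:ℝ) < 2 / ε + 1 := by positivity
  have hck' : c * (2 / ε + 1) ≤ 1 := by
    rw [le_div_iff₀ heps] at hσS
    exact hσS
  have h1c : 0 < 1 - c := by nlinarith
  have h2' : c * 2 + c * ε ≤ ε := by
    have h := mul_le_mul_of_nonneg_left hck' hε.le
    have he : ε * (c * (2 / ε + 1)) = c * 2 + c * ε := by
      field_simp
    rw [he] at h
    linarith
  have hratio : c ≤ (ε / 2) * (1 - c) := by nlinarith
  have hzn : 0 ≤ ‖z‖ := norm_nonneg _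
  nlinarith [norm_nonneg (zt - z), mul_le_mul_of_nonneg_left hratio hzn,
    mul_nonneg hc0 hzn]
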